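/- If G is a connected critical graph, then G has a unique independence packing, namely the trivial one consisting of G itself. -/

import Mathlib

open SimpleGraph

/-- A set of vertices is independent if no two of its members are adjacent. -/
def IsIndepSet {V : Type*} (G : SimpleGraph V) (s : Set V) : Prop :=
  s.Pairwise fun a b => ¬ G.Adj a b

/-- The independence number of a graph: the maximum size of an independent set. -/
noncomputable def alpha {V : Type*} (G : SimpleGraph V) : ℕ :=
  sSup {n | ∃ s : Finset V, _root_.IsIndepSet G (s : Set V) ∧ s.card = n}

/-- A graph is critical if deleting any edge strictly increases the independence number. -/
def IsCritical {V : Type*} (G : SimpleGraph V) : Prop :=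
  ∀ e ∈ G.edgeSet, alpha G < alpha (G.deleteEdges {e})

/-- An independence packing of `H`: a family of pairwise vertex-disjoint connected critical
subgraphs covering all vertices, whose independence numbers sum to `alpha H`. -/
def IsIndepPacking {V : Type*} (H : SimpleGraph V) {k : ℕ} (F : Fin k → H.Subgraph) : Prop :=
  (∀ i j : Fin k, i ≠ j → Disjoint (F i).verts (F j).verts) ∧
  (∀ i : Fin k, (F i).coe.Connected ∧ IsCritical (F i).coe) ∧
  (⋃ i : Fin k, (F i).verts) = Set.univ ∧
  alpha H = ∑ i : Fin k, alpha (F i).coe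

lemma alphaSet_nonempty {V : Type*} (G : SimpleGraph V) :
    {n | ∃ s : Finset V, _root_.IsIndepSet G (s : Set V) ∧ s.card = n}.Nonempty :=
  ⟨0, ∅, by simp [_root_.IsIndepSet], rfl⟩

lemma alphaSet_bdd {V : Type*} [Finite V] (G : SimpleGraph V) :
    BddAbove {n | ∃ s : Finset V, _root_.IsIndepSet G (s : Set V) ∧ s.card = n} := by
  have := Fintype.ofFinite V
  exact ⟨Fintype.card V, fun n ⟨s, _, hc⟩ => hc ▸ Finset.card_le_univ s⟩

lemma card_le_alpha {V : Type*} [Finite V] {G : SimpleGraph V} {s : Finset V}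
    (h : _root_.IsIndepSet G (s : Set V)) : s.card ≤ alpha G :=
  le_csSup (alphaSet_bdd G) ⟨s, h, rfl⟩

lemma exists_alpha_set {V : Type*} [Finite V] (G : SimpleGraph V) :
    ∃ s : Finset V, _root_.IsIndepSet G (s : Set V) ∧ s.card = alpha G :=
  Nat.sSup_mem (alphaSet_nonempty G) (alphaSet_bdd G)

lemma cross_lemma {V : Type*} {G : SimpleGraph V} {A : Set V} :
    ∀ {u v : V}, G.Walk u v → u ∈ A → v ∉ A → ∃ x y, x ∈ A ∧ y ∉ A ∧ G.Adj x y := by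
  intro u v w
  induction w with
  | nil => intro h h'; exact absurd h h'
  | @cons a b c h p ih =>
    intro hu hv
    by_cases hm : b ∈ A
    · exact ih hm hv
    · exact ⟨a, b, hu, hm, h⟩

lemma key_lemma {V : Type*} [Fintype V] (G : SimpleGraph V) {k : ℕ}
    (F : Fin k → G.Subgraph) (hF : IsIndepPacking G F) {e : Sym2 V}
    (he : ∀ i, e ∉ (F i).edgeSet) :
    alpha (G.deleteEdges {e}) ≤ alpha G := by
  classical
  obtain ⟨hdisj, hcc, hcov, hsum⟩ := hF
  obtain ⟨S, hS, hcard⟩ := exists_alpha_set (G.deleteEdges {e})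
  rw [← hcard, hsum]
  have hchoice : ∀ v : V, ∃ i, v ∈ (F i).verts := by
    intro v
    have hv : v ∈ (⋃ i : Fin k, (F i).verts) := hcov ▸ Set.mem_univ v
    exact Set.mem_iUnion.mp hv
  choose f hf using hchoice
  rw [Finset.card_eq_sum_card_fiberwise (f := f) (t := Finset.univ)
    (fun x _ => Finset.mem_univ _)]
  apply Finset.sum_le_sum
  intro i _
  set T := S.filter (fun v => f v = i) with hTdef
  have hT : ∀ v ∈ T, v ∈ (F i).verts := fun v hv => by
    have h2 := (Finset.mem_filter.mp hv).2
    exact h2 ▸ hf v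
  let emb : {x // x ∈ T} ↪ ((F i).verts : Set V) :=
    ⟨fun x => ⟨x.1, hT x.1 x.2⟩, fun a b hab => Subtype.ext (by simpa using congrArg Subtype.val hab)⟩
  have hmem : ∀ a : ((F i).verts : Set V), a ∈ T.attach.map emb → (a : V) ∈ T := by
    intro a ha
    obtain ⟨x, _, hx⟩ := Finset.mem_map.mp ha
    rw [← hx]
    exact x.2
  have hcard' : (T.attach.map emb).card = T.card := by simp
  refine hcard' ▸ card_le_alpha ?_
  intro a ha b hb hne hadj
  have haT : (a : V) ∈ T := hmem a ha
  have hbT : (b : V) ∈ T := hmem b hb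
  have hadj' : (F i).Adj a b := hadj
  have hGadj : G.Adj (a : V) (b : V) := (F i).adj_sub hadj'
  have hee : s((a : V), (b : V)) ≠ e := fun h => he i (h ▸ Subgraph.mem_edgeSet.mpr hadj')
  have haS : (a : V) ∈ (S : Set V) := Finset.mem_coe.mpr (Finset.mem_filter.mp haT).1
  have hbS : (b : V) ∈ (S : Set V) := Finset.mem_coe.mpr (Finset.mem_filter.mp hbT).1
  have hne' : (a : V) ≠ (b : V) := fun h => hne (Subtype.ext h)
  exact hS haS hbS hne' (deleteEdges_adj.mpr ⟨hGadj, by simpa using hee⟩)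

/-- A connected critical graph has a unique independence packing, namely the trivial one
consisting of `G` itself. -/
theorem stmt_7 {V : Type*} [Fintype V] (G : SimpleGraph V)
    (hconn : G.Connected) (hcrit : IsCritical G)
    {k : ℕ} (F : Fin k → G.Subgraph) (hF : IsIndepPacking G F) :
    k = 1 ∧ ∀ i : Fin k, F i = ⊤ := by
  classical
  have hdisj := hF.1
  have hcc := hF.2.1
  have hcov := hF.2.2.1
  have hV : Nonempty V := hconn.nonempty
  -- every part spans all vertices
  have hverts : ∀ i, (F i).verts = Set.univ := by
    intro i
    by_contra hne
    have : ∃ v, v ∉ (F i).verts := by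
      by_contra h
      push_neg at h
      exact hne (Set.eq_univ_of_forall h)
    obtain ⟨v, hv⟩ := this
    obtain ⟨⟨u, hu⟩⟩ := (hcc i).1.nonempty
    obtain ⟨w⟩ := hconn.preconnected u v
    obtain ⟨x, y, hx, hy, hxy⟩ := cross_lemma w hu hv
    have he : ∀ j, s(x, y) ∉ (F j).edgeSet := by
      intro j hmem
      have hadj : (F j).Adj x y := Subgraph.mem_edgeSet.mp hmem
      have hx' : x ∈ (F j).verts := (F j).edge_vert hadj
      have hy' : y ∈ (F j).verts := (F j).edge_vert hadj.symm
      by_cases hij : j = i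
      · exact hy (hij ▸ hy')
      · exact Set.disjoint_left.mp (hdisj j i hij) hx' hx
    exact absurd (key_lemma G F hF he) (not_le.mpr (hcrit _ (G.mem_edgeSet.mpr hxy)))
  -- all indices equal
  have hall : ∀ i j : Fin k, i = j := by
    intro i j
    by_contra hij
    have hd := hdisj i j hij
    rw [hverts i, hverts j] at hd
    obtain ⟨v⟩ := hV
    exact Set.disjoint_left.mp hd (Set.mem_univ v) (Set.mem_univ v)
  have hk0 : Nonempty (Fin k) := by
    obtain ⟨v⟩ := hV
    have hv : v ∈ (⋃ i : Fin k, (F i).verts) := hcov ▸ Set.mem_univ v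
    obtain ⟨i, _⟩ := Set.mem_iUnion.mp hv
    exact ⟨i⟩
  have hk1 : k = 1 := by
    obtain ⟨i₀⟩ := hk0
    have : Fintype.card (Fin k) = 1 := Fintype.card_eq_one_iff.mpr ⟨i₀, fun y => hall y i₀⟩
    simpa using this
  refine ⟨hk1, fun i => ?_⟩
  apply SimpleGraph.Subgraph.ext
  · rw [hverts i]; rfl
  · ext a b
    rw [Subgraph.top_adj]
    constructor
    · exact fun h => (F i).adj_sub h
    · intro hab
      by_contra hnadj
      have he : ∀ j, s(a, b) ∉ (F j).edgeSet := by
        intro j hmem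
        have : (F j).Adj a b := Subgraph.mem_edgeSet.mp hmem
        exact hnadj ((hall j i) ▸ this)
      exact absurd (key_lemma G F hF he) (not_le.mpr (hcrit _ (G.mem_edgeSet.mpr hab)))
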